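/- arXiv:2502.19878 — 4 statements merged into one kernel-verified Lean document; each statement's English description precedes it below -/
import Mathlib

section
/- Let A be the 3×3 matrix [[-a1,0,0],[g1,-a2,0],[0,g2,-a3]] with distinct constants a1,a2,a3>0 and gains g1,g2>0, B=(1,0,0)ᵀ, C=(0,0,1), and let Φ, F : ℝ → ℝ be modulation functions with Φ(·) > 0. A vector X ∈ ℝ³ is a fixed point of the map Q(ξ) = exp(A·Φ(Cξ))·(ξ + F(Cξ)B) if and only if X = λ·(exp(−TA) − I)^{−1}·B, where T = Φ(CX) and λ = F(CX). -/
open Matrix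

noncomputable section

/-- State matrix of the linear pharmacokinetic block. -/
def Amat (a1 a2 a3 g1 g2 : ℝ) : Matrix (Fin 3) (Fin 3) ℝ :=
  !![-a1, 0, 0; g1, -a2, 0; 0, g2, -a3]

/-- Input direction of the impulsive doses. -/
def Bvec : Fin 3 → ℝ := ![1, 0, 0]

/-- Output row vector. -/
def Cvec : Fin 3 → ℝ := ![0, 0, 1]

/-- The pointwise (stroboscopic) map of the hybrid pulse-modulated system. -/
def Qmap (a1 a2 a3 g1 g2 : ℝ) (Φ F : ℝ → ℝ) (ξ : Fin 3 → ℝ) : Fin 3 → ℝ :=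
  (NormedSpace.exp ((Φ (Cvec ⬝ᵥ ξ)) • Amat a1 a2 a3 g1 g2)).mulVec
    (ξ + F (Cvec ⬝ᵥ ξ) • Bvec)

/-- Eigenvector matrix of `Amat`. -/
def Pmat (a1 a2 a3 g1 g2 : ℝ) : Matrix (Fin 3) (Fin 3) ℝ :=
  !![(a2 - a1) * (a3 - a1), 0, 0; g1 * (a3 - a1), a3 - a2, 0; g1 * g2, g2, 1]

lemma Pmat_det (a1 a2 a3 g1 g2 : ℝ) :
    (Pmat a1 a2 a3 g1 g2).det = (a2 - a1) * (a3 - a1) * (a3 - a2) := by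
  simp [Pmat, Matrix.det_fin_three]

lemma AP_eq_PD (a1 a2 a3 g1 g2 : ℝ) :
    Amat a1 a2 a3 g1 g2 * Pmat a1 a2 a3 g1 g2 =
      Pmat a1 a2 a3 g1 g2 * Matrix.diagonal ![-a1, -a2, -a3] := by
  ext i j
  fin_cases i <;> fin_cases j <;>
    simp [Amat, Pmat, Matrix.mul_apply, Fin.sum_univ_three, Matrix.diagonal] <;> ring

/-- Explicit diagonalization of the matrix exponential. -/
lemma exp_smul_Amat (a1 a2 a3 g1 g2 : ℝ)
    (h12 : a1 ≠ a2) (h13 : a1 ≠ a3) (h23 : a2 ≠ a3) (s : ℝ) :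
    NormedSpace.exp (s • Amat a1 a2 a3 g1 g2) =
      Pmat a1 a2 a3 g1 g2 *
        Matrix.diagonal (fun i => Real.exp (s * (![-a1, -a2, -a3]) i)) *
        (Pmat a1 a2 a3 g1 g2)⁻¹ := by
  have hdet : (Pmat a1 a2 a3 g1 g2).det ≠ 0 := by
    rw [Pmat_det]
    exact mul_ne_zero (mul_ne_zero (sub_ne_zero.2 (Ne.symm h12)) (sub_ne_zero.2 (Ne.symm h13)))
      (sub_ne_zero.2 (Ne.symm h23))
  have hP : IsUnit (Pmat a1 a2 a3 g1 g2) :=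
    (Matrix.isUnit_iff_isUnit_det _).2 (isUnit_iff_ne_zero.2 hdet)
  have hA : Amat a1 a2 a3 g1 g2 =
      Pmat a1 a2 a3 g1 g2 * Matrix.diagonal ![-a1, -a2, -a3] * (Pmat a1 a2 a3 g1 g2)⁻¹ := by
    have := congrArg (· * (Pmat a1 a2 a3 g1 g2)⁻¹) (AP_eq_PD a1 a2 a3 g1 g2)
    simpa [Matrix.mul_assoc, Matrix.mul_nonsing_inv _ ((Matrix.isUnit_iff_isUnit_det _).1 hP)]
      using this
  have hsA : s • Amat a1 a2 a3 g1 g2 =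
      Pmat a1 a2 a3 g1 g2 * Matrix.diagonal (fun i => s * (![-a1, -a2, -a3]) i) *
        (Pmat a1 a2 a3 g1 g2)⁻¹ := by
    rw [hA, show (fun i => s * (![-a1, -a2, -a3]) i) = s • ![-a1, -a2, -a3] from rfl,
      Matrix.diagonal_smul, Matrix.mul_smul, Matrix.smul_mul]
  rw [hsA, Matrix.exp_conj _ _ hP, Matrix.exp_diagonal, Pi.exp_def]
  rw [← Real.exp_eq_exp_ℝ]

/-- `X` is a fixed point of `Q` if and only if
`X = λ·(exp(−TA) − I)^{−1}·B` with `T = Φ(CX)` and `λ = F(CX)`. -/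
theorem stmt5 (a1 a2 a3 g1 g2 : ℝ) (ha1 : 0 < a1) (ha2 : 0 < a2) (ha3 : 0 < a3)
    (h12 : a1 ≠ a2) (h13 : a1 ≠ a3) (h23 : a2 ≠ a3) (hg1 : 0 < g1) (hg2 : 0 < g2)
    (Φ F : ℝ → ℝ) (hΦpos : ∀ y : ℝ, 0 < Φ y)
    (X : Fin 3 → ℝ) (T lam : ℝ) (hT : T = Φ (Cvec ⬝ᵥ X)) (hlam : lam = F (Cvec ⬝ᵥ X)) :
    Qmap a1 a2 a3 g1 g2 Φ F X = X ↔
      X = lam • ((NormedSpace.exp ((-T) • Amat a1 a2 a3 g1 g2) - 1)⁻¹).mulVec Bvec := by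
  set A := Amat a1 a2 a3 g1 g2 with hAdef
  set E := NormedSpace.exp (T • A) with hE
  set M := NormedSpace.exp ((-T) • A) with hM
  have hTpos : 0 < T := hT ▸ hΦpos _
  -- E and M are mutually inverse
  have hcomm : Commute ((-T) • A) (T • A) := ((Commute.refl A).smul_left (-T)).smul_right T
  have hsum : (-T) • A + T • A = 0 := by rw [← add_smul, neg_add_cancel, zero_smul]
  have hME : M * E = 1 := by
    rw [hM, hE, ← Matrix.exp_add_of_commute _ _ hcomm, hsum, NormedSpace.exp_zero]
  have hEM : E * M = 1 := by
    rw [hM, hE, ← Matrix.exp_add_of_commute _ _ hcomm.symm, add_comm (T • A), hsum,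
      NormedSpace.exp_zero]
  -- invertibility of M - 1
  have hdetP : (Pmat a1 a2 a3 g1 g2).det ≠ 0 := by
    rw [Pmat_det]
    exact mul_ne_zero (mul_ne_zero (sub_ne_zero.2 (Ne.symm h12)) (sub_ne_zero.2 (Ne.symm h13)))
      (sub_ne_zero.2 (Ne.symm h23))
  have hP : IsUnit (Pmat a1 a2 a3 g1 g2) :=
    (Matrix.isUnit_iff_isUnit_det _).2 (isUnit_iff_ne_zero.2 hdetP)
  have hPPinv : Pmat a1 a2 a3 g1 g2 * (Pmat a1 a2 a3 g1 g2)⁻¹ = 1 :=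
    Matrix.mul_nonsing_inv _ ((Matrix.isUnit_iff_isUnit_det _).1 hP)
  have hMform : M = Pmat a1 a2 a3 g1 g2 *
      Matrix.diagonal (fun i => Real.exp ((-T) * (![-a1, -a2, -a3]) i)) *
      (Pmat a1 a2 a3 g1 g2)⁻¹ := by
    rw [hM, hAdef, exp_smul_Amat a1 a2 a3 g1 g2 h12 h13 h23]
  have hMsub : M - 1 = Pmat a1 a2 a3 g1 g2 *
      Matrix.diagonal (fun i => Real.exp ((-T) * (![-a1, -a2, -a3]) i) - 1) *
      (Pmat a1 a2 a3 g1 g2)⁻¹ := by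
    rw [hMform]
    have : (Matrix.diagonal (fun i => Real.exp ((-T) * (![-a1, -a2, -a3]) i) - 1)
        : Matrix (Fin 3) (Fin 3) ℝ) =
        Matrix.diagonal (fun i => Real.exp ((-T) * (![-a1, -a2, -a3]) i)) - 1 := by
      rw [← Matrix.diagonal_one, Matrix.diagonal_sub]
    rw [this, Matrix.mul_sub, Matrix.sub_mul, Matrix.mul_one, hPPinv]
  have hdiagpos : ∀ i : Fin 3, Real.exp ((-T) * (![-a1, -a2, -a3]) i) - 1 ≠ 0 := by
    intro i
    have : (0:ℝ) < (-T) * (![-a1, -a2, -a3]) i := by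
      fin_cases i <;> simp <;> positivity
    have h1 : (1:ℝ) < Real.exp ((-T) * (![-a1, -a2, -a3]) i) := by
      calc (1:ℝ) = Real.exp 0 := Real.exp_zero.symm
      _ < _ := Real.exp_lt_exp.2 this
    exact ne_of_gt (by linarith)
  have hdetM : (M - 1).det ≠ 0 := by
    rw [hMsub, Matrix.det_mul, Matrix.det_mul, Matrix.det_diagonal,
      Matrix.det_nonsing_inv]
    refine mul_ne_zero (mul_ne_zero hdetP ?_) (by simp [Ring.inverse_eq_inv', hdetP])
    exact Finset.prod_ne_zero_iff.2 fun i _ => hdiagpos i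
  have hN : IsUnit (M - 1) :=
    (Matrix.isUnit_iff_isUnit_det _).2 (isUnit_iff_ne_zero.2 hdetM)
  have hNdet : IsUnit (M - 1).det := isUnit_iff_ne_zero.2 hdetM
  have hNinv : (M - 1) * (M - 1)⁻¹ = 1 := Matrix.mul_nonsing_inv _ hNdet
  have hNinv' : (M - 1)⁻¹ * (M - 1) = 1 := Matrix.nonsing_inv_mul _ hNdet
  -- unfold Qmap
  have hQ : Qmap a1 a2 a3 g1 g2 Φ F X = E.mulVec (X + lam • Bvec) := by
    rw [Qmap, ← hT, ← hlam]
  rw [hQ]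
  constructor
  · intro h
    have h1 : X + lam • Bvec = M.mulVec X := by
      have := congrArg M.mulVec h
      rwa [Matrix.mulVec_mulVec, hME, Matrix.one_mulVec] at this
    have h2 : (M - 1).mulVec X = lam • Bvec := by
      rw [Matrix.sub_mulVec, Matrix.one_mulVec, ← h1]
      abel
    have := congrArg (M - 1)⁻¹.mulVec h2
    rwa [Matrix.mulVec_mulVec, hNinv', Matrix.one_mulVec, Matrix.mulVec_smul] at this
  · intro h
    have h2 : (M - 1).mulVec X = lam • Bvec := by
      rw [h, Matrix.mulVec_smul, Matrix.mulVec_mulVec, hNinv, Matrix.one_mulVec]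
    have h1 : M.mulVec X = X + lam • Bvec := by
      rw [Matrix.sub_mulVec, Matrix.one_mulVec] at h2
      rw [← h2]; abel
    have := congrArg E.mulVec h1
    rw [Matrix.mulVec_mulVec, hEM, Matrix.one_mulVec] at this
    exact this.symm
end
end

section
/- Let A be the 3×3 matrix [[-a1,0,0],[g1,-a2,0],[0,g2,-a3]] with distinct constants a1,a2,a3>0 and gains g1,g2>0 and B=(1,0,0)ᵀ. For every T > 0 and λ > 0, all three components of the vector λ·(exp(−TA) − I)^{−1}·B are strictly positive. -/
open Matrix

noncomputable section

lemma expinv_strictConvex {T : ℝ} (hT : 0 < T) :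
    StrictConvexOn ℝ (Set.Ioi (0:ℝ)) (fun x => (Real.exp (T*x) - 1)⁻¹) := by
  set f : ℝ → ℝ := fun x => (Real.exp (T*x) - 1)⁻¹ with hf
  set g : ℝ → ℝ := fun x => -(Real.exp (T*x) * T) / (Real.exp (T*x) - 1)^2 with hg
  have hne : ∀ x ∈ Set.Ioi (0:ℝ), Real.exp (T*x) - 1 ≠ 0 := by
    intro x hx
    have : 1 < Real.exp (T*x) := by
      rw [show (1:ℝ) = Real.exp 0 by simp]
      exact Real.exp_lt_exp.2 (mul_pos hT hx)
    linarith
  have hu : ∀ x : ℝ, HasDerivAt (fun x => Real.exp (T*x) - 1) (Real.exp (T*x) * T) x := by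
    intro x
    have h := (((hasDerivAt_id x).const_mul T).exp).sub_const 1
    simpa using h
  have hderiv : ∀ x ∈ Set.Ioi (0:ℝ), deriv f x = g x := by
    intro x hx
    exact ((hu x).inv (hne x hx)).deriv
  apply strictConvexOn_of_deriv2_pos (convex_Ioi 0)
  · exact ContinuousOn.inv₀ (by fun_prop) hne
  · intro x hx
    rw [interior_Ioi] at hx
    have hev : deriv f =ᶠ[nhds x] g :=
      Filter.eventuallyEq_of_mem (Ioi_mem_nhds hx) hderiv
    have h2 : deriv (deriv f) x = deriv g x := hev.deriv_eq
    have hD : HasDerivAt (fun x => (Real.exp (T*x) - 1)^2)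
        (2 * (Real.exp (T*x) - 1)^1 * (Real.exp (T*x) * T)) x := (hu x).pow 2
    have hN : HasDerivAt (fun x => -(Real.exp (T*x) * T))
        (-(Real.exp (T*x) * T * T)) x := by
      have h := ((((hasDerivAt_id x).const_mul T).exp).mul_const T).neg
      simp only [id_eq, mul_one] at h
      exact h
    have hDg : HasDerivAt g
        ((-(Real.exp (T*x) * T * T) * (Real.exp (T*x) - 1)^2 -
          -(Real.exp (T*x) * T) * (2 * (Real.exp (T*x) - 1)^1 * (Real.exp (T*x) * T))) /
          ((Real.exp (T*x) - 1)^2)^2) x := by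
      have h2ne : ((Real.exp (T*x) - 1)^2) ≠ 0 := pow_ne_zero 2 (hne x hx)
      exact hN.div hD h2ne
    simp only [Function.iterate_succ, Function.iterate_zero, Function.comp_apply, id_eq]
    rw [h2, hDg.deriv]
    have he : 1 < Real.exp (T*x) := by
      rw [show (1:ℝ) = Real.exp 0 by simp]
      exact Real.exp_lt_exp.2 (mul_pos hT hx)
    have hepos : 0 < Real.exp (T*x) := Real.exp_pos _
    apply div_pos
    · have heq : (-(Real.exp (T*x) * T * T) * (Real.exp (T*x) - 1)^2 -
          -(Real.exp (T*x) * T) * (2 * (Real.exp (T*x) - 1)^1 * (Real.exp (T*x) * T)))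
          = T^2 * Real.exp (T*x) * (Real.exp (T*x) - 1) * (Real.exp (T*x) + 1) := by ring
      rw [heq]
      exact mul_pos (mul_pos (mul_pos (pow_pos hT 2) hepos) (by linarith)) (by linarith)
    · exact pow_pos (pow_pos (by linarith) 2) 2

lemma dd_num {f : ℝ → ℝ} (hf : StrictConvexOn ℝ (Set.Ioi (0:ℝ)) f)
    {u v w : ℝ} (hu : 0 < u) (huv : u < v) (hvw : v < w) :
    0 < f u * (w - v) - f v * (w - u) + f w * (v - u) := by
  have hwu : 0 < w - u := by linarith
  have hwv : 0 < w - v := by linarith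
  have hvu : 0 < v - u := by linarith
  have hcomb : ((w-v)/(w-u)) • u + ((v-u)/(w-u)) • w = v := by
    rw [smul_eq_mul, smul_eq_mul]
    field_simp
    ring
  have key := hf.2 (Set.mem_Ioi.2 hu) (Set.mem_Ioi.2 (by linarith : (0:ℝ) < w))
      (by intro h; rw [h] at hwu; linarith)
      (div_pos hwv hwu) (div_pos hvu hwu) (by field_simp; ring)
  rw [hcomb, smul_eq_mul, smul_eq_mul] at key
  have key2 := mul_lt_mul_of_pos_left key hwu
  rw [mul_add] at key2
  have e1 : (w-u) * ((w-v)/(w-u) * f u) = (w-v) * f u := by field_simp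
  have e2 : (w-u) * ((v-u)/(w-u) * f w) = (v-u) * f w := by field_simp
  rw [e1, e2] at key2
  nlinarith [key2]

lemma S_pos {f : ℝ → ℝ} (hf : StrictConvexOn ℝ (Set.Ioi (0:ℝ)) f)
    {x y z : ℝ} (hx : 0 < x) (hy : 0 < y) (hz : 0 < z)
    (hxy : x ≠ y) (hxz : x ≠ z) (hyz : y ≠ z) :
    0 < f x / ((y-x)*(z-x)) - f y / ((y-x)*(z-y)) + f z / ((z-x)*(z-y)) := by
  have hxy' : y - x ≠ 0 := sub_ne_zero.2 (Ne.symm hxy)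
  have hxz' : z - x ≠ 0 := sub_ne_zero.2 (Ne.symm hxz)
  have hyz' : z - y ≠ 0 := sub_ne_zero.2 (Ne.symm hyz)
  have hxy'' : x - y ≠ 0 := sub_ne_zero.2 hxy
  have hxz'' : x - z ≠ 0 := sub_ne_zero.2 hxz
  have hyz'' : y - z ≠ 0 := sub_ne_zero.2 hyz
  rcases lt_trichotomy x y with h1 | h1 | h1
  · rcases lt_trichotomy y z with h2 | h2 | h2
    · -- x < y < z
      have key := dd_num hf hx h1 h2
      have heq : f x / ((y-x)*(z-x)) - f y / ((y-x)*(z-y)) + f z / ((z-x)*(z-y))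
          = (f x * (z - y) - f y * (z - x) + f z * (y - x)) / ((y-x)*(z-y)*(z-x)) := by
        field_simp
      rw [heq]
      exact div_pos key (mul_pos (mul_pos (by linarith) (by linarith)) (by linarith))
    · exact absurd h2 hyz
    · rcases lt_trichotomy x z with h3 | h3 | h3
      · -- x < z < y
        have key := dd_num hf hx h3 h2
        have heq : f x / ((y-x)*(z-x)) - f y / ((y-x)*(z-y)) + f z / ((z-x)*(z-y))
            = (f x * (y - z) - f z * (y - x) + f y * (z - x)) / ((z-x)*(y-z)*(y-x)) := by
          field_simp; ring
        rw [heq]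
        exact div_pos key (mul_pos (mul_pos (by linarith) (by linarith)) (by linarith))
      · exact absurd h3 hxz
      · -- z < x < y
        have key := dd_num hf hz h3 h1
        have heq : f x / ((y-x)*(z-x)) - f y / ((y-x)*(z-y)) + f z / ((z-x)*(z-y))
            = (f z * (y - x) - f x * (y - z) + f y * (x - z)) / ((x-z)*(y-x)*(y-z)) := by
          field_simp; ring
        rw [heq]
        exact div_pos key (mul_pos (mul_pos (by linarith) (by linarith)) (by linarith))
  · exact absurd h1 hxy
  · rcases lt_trichotomy x z with h2 | h2 | h2
    · -- y < x < z
      have key := dd_num hf hy h1 h2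
      have heq : f x / ((y-x)*(z-x)) - f y / ((y-x)*(z-y)) + f z / ((z-x)*(z-y))
          = (f y * (z - x) - f x * (z - y) + f z * (x - y)) / ((x-y)*(z-x)*(z-y)) := by
        field_simp; ring
      rw [heq]
      exact div_pos key (mul_pos (mul_pos (by linarith) (by linarith)) (by linarith))
    · exact absurd h2 hxz
    · rcases lt_trichotomy y z with h3 | h3 | h3
      · -- y < z < x
        have key := dd_num hf hy h3 h2
        have heq : f x / ((y-x)*(z-x)) - f y / ((y-x)*(z-y)) + f z / ((z-x)*(z-y))
            = (f y * (x - z) - f z * (x - y) + f x * (z - y)) / ((z-y)*(x-z)*(x-y)) := by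
          field_simp; ring
        rw [heq]
        exact div_pos key (mul_pos (mul_pos (by linarith) (by linarith)) (by linarith))
      · exact absurd h3 hyz
      · -- z < y < x
        have key := dd_num hf hz h3 h1
        have heq : f x / ((y-x)*(z-x)) - f y / ((y-x)*(z-y)) + f z / ((z-x)*(z-y))
            = (f z * (x - y) - f y * (x - z) + f x * (y - z)) / ((y-z)*(x-y)*(x-z)) := by
          field_simp; ring
        rw [heq]
        exact div_pos key (mul_pos (mul_pos (by linarith) (by linarith)) (by linarith))

lemma diag3 (u v w : ℝ) :
    Matrix.diagonal ![u, v, w] = !![u,0,0; 0,v,0; 0,0,w] := by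
  ext i j
  fin_cases i <;> fin_cases j <;>
    simp [Matrix.diagonal_apply, Matrix.vecHead, Matrix.vecTail]

set_option maxHeartbeats 1000000 in
/-- for every `T > 0` and `λ > 0`, all three components of the 1-cycle
fixed point `λ·(exp(−TA) − I)^{−1}·B` are strictly positive. -/
theorem stmt6 (a1 a2 a3 g1 g2 : ℝ) (ha1 : 0 < a1) (ha2 : 0 < a2) (ha3 : 0 < a3)
    (h12 : a1 ≠ a2) (h13 : a1 ≠ a3) (h23 : a2 ≠ a3) (hg1 : 0 < g1) (hg2 : 0 < g2)
    (T lam : ℝ) (hT : 0 < T) (hlam : 0 < lam) :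
    ∀ i : Fin 3,
      0 < (lam • ((NormedSpace.exp ((-T) • Amat a1 a2 a3 g1 g2) - 1)⁻¹).mulVec Bvec) i := by
  have h21 : a2 - a1 ≠ 0 := sub_ne_zero.2 (Ne.symm h12)
  have h31 : a3 - a1 ≠ 0 := sub_ne_zero.2 (Ne.symm h13)
  have h32 : a3 - a2 ≠ 0 := sub_ne_zero.2 (Ne.symm h23)
  set P : Matrix (Fin 3) (Fin 3) ℝ :=
    !![1,0,0; g1/(a2-a1),1,0; g1*g2/((a2-a1)*(a3-a1)), g2/(a3-a2), 1] with hP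
  set Q : Matrix (Fin 3) (Fin 3) ℝ :=
    !![1,0,0; -(g1/(a2-a1)),1,0; g1*g2/((a3-a1)*(a3-a2)), -(g2/(a3-a2)), 1] with hQ
  have hPQ : P * Q = 1 := by
    ext i j
    fin_cases i <;> fin_cases j <;>
      simp [hP, hQ, Matrix.mul_apply, Fin.sum_univ_three, Matrix.one_apply] <;>
      field_simp <;> ring
  have hQP : Q * P = 1 := by
    ext i j
    fin_cases i <;> fin_cases j <;>
      simp [hP, hQ, Matrix.mul_apply, Fin.sum_univ_three, Matrix.one_apply] <;>
      field_simp <;> ring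
  have hA : (-T) • Amat a1 a2 a3 g1 g2 = P * Matrix.diagonal ![T*a1, T*a2, T*a3] * Q := by
    rw [diag3]
    ext i j
    fin_cases i <;> fin_cases j <;>
      simp [hP, hQ, Amat, Matrix.mul_apply, Fin.sum_univ_three, Matrix.smul_apply,
        smul_eq_mul] <;>
      field_simp <;> ring
  set uP : (Matrix (Fin 3) (Fin 3) ℝ)ˣ := ⟨P, Q, hPQ, hQP⟩ with huP
  have hexp : NormedSpace.exp ((-T) • Amat a1 a2 a3 g1 g2)
      = P * NormedSpace.exp (Matrix.diagonal ![T*a1, T*a2, T*a3]) * Q := by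
    rw [hA]
    exact Matrix.exp_units_conj uP _
  have hexpD : NormedSpace.exp (Matrix.diagonal ![T*a1, T*a2, T*a3])
      = Matrix.diagonal ![Real.exp (T*a1), Real.exp (T*a2), Real.exp (T*a3)] := by
    rw [Matrix.exp_diagonal, Pi.exp_def]
    exact congrArg Matrix.diagonal (by
      funext i
      fin_cases i <;> simp [← Real.exp_eq_exp_ℝ])
  -- the three diagonal values
  have hEpos : ∀ a : ℝ, 0 < a → 0 < Real.exp (T*a) - 1 := by
    intro a ha
    have : 1 < Real.exp (T*a) := by
      rw [show (1:ℝ) = Real.exp 0 by simp]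
      exact Real.exp_lt_exp.2 (mul_pos hT ha)
    linarith
  set w : Fin 3 → ℝ := ![Real.exp (T*a1) - 1, Real.exp (T*a2) - 1, Real.exp (T*a3) - 1]
    with hw
  have hwne : ∀ i, w i ≠ 0 := by
    intro i
    fin_cases i <;>
      simpa [hw] using (ne_of_gt (hEpos _ (by assumption)))
  have hM : NormedSpace.exp ((-T) • Amat a1 a2 a3 g1 g2) - 1
      = P * Matrix.diagonal w * Q := by
    rw [hexp, hexpD]
    have h1 : (1 : Matrix (Fin 3) (Fin 3) ℝ) = P * 1 * Q := by rw [mul_one, hPQ]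
    rw [h1, ← Matrix.sub_mul, ← Matrix.mul_sub]
    have hdiag : Matrix.diagonal ![Real.exp (T*a1), Real.exp (T*a2), Real.exp (T*a3)] - 1
        = Matrix.diagonal w := by
      rw [← Matrix.diagonal_one, Matrix.diagonal_sub]
      exact congrArg Matrix.diagonal (by
        funext i
        fin_cases i <;> simp [hw])
    rw [hdiag]
  set R : Matrix (Fin 3) (Fin 3) ℝ := P * Matrix.diagonal (fun i => (w i)⁻¹) * Q with hR
  have hMR : (NormedSpace.exp ((-T) • Amat a1 a2 a3 g1 g2) - 1) * R = 1 := by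
    rw [hM, hR]
    calc P * Matrix.diagonal w * Q * (P * Matrix.diagonal (fun i => (w i)⁻¹) * Q)
        = P * Matrix.diagonal w * (Q * P) * Matrix.diagonal (fun i => (w i)⁻¹) * Q := by
          noncomm_ring
      _ = P * (Matrix.diagonal w * Matrix.diagonal (fun i => (w i)⁻¹)) * Q := by
          rw [hQP, mul_one]; noncomm_ring
      _ = P * Q := by
          rw [Matrix.diagonal_mul_diagonal]
          have : (fun i => w i * (w i)⁻¹) = fun _ : Fin 3 => (1:ℝ) := by
            funext i; exact mul_inv_cancel₀ (hwne i)
          rw [this, Matrix.diagonal_one, mul_one]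
      _ = 1 := hPQ
  have hinv : (NormedSpace.exp ((-T) • Amat a1 a2 a3 g1 g2) - 1)⁻¹ = R :=
    Matrix.inv_eq_right_inv hMR
  rw [hinv]
  have hanti : ∀ b c : ℝ, 0 < b → b < c →
      (Real.exp (T*c) - 1)⁻¹ < (Real.exp (T*b) - 1)⁻¹ := by
    intro b c hb hbc
    apply inv_strictAnti₀ (hEpos b hb)
    have : Real.exp (T*b) < Real.exp (T*c) :=
      Real.exp_lt_exp.2 (by nlinarith)
    linarith
  intro i
  have hfin : ∀ j : Fin 3, (R.mulVec Bvec) j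
      = (P * Matrix.diagonal (fun i => (w i)⁻¹) * Q) j 0 := by
    intro j
    simp [Matrix.mulVec, dotProduct, Bvec, Fin.sum_univ_three, hR]
  fin_cases i <;>
    simp only [Pi.smul_apply, smul_eq_mul] <;>
    rw [hfin] <;>
    simp [hP, hQ, Matrix.mul_apply, Fin.sum_univ_three, Matrix.diagonal_apply, hw,
      Matrix.vecMul_diagonal, Matrix.vecHead, Matrix.vecTail]
  · exact mul_pos hlam (inv_pos.2 (hEpos a1 ha1))
  · have key : 0 < ((Real.exp (T*a1) - 1)⁻¹ - (Real.exp (T*a2) - 1)⁻¹) / (a2 - a1) := by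
      rcases lt_or_gt_of_ne h12 with hlt | hgt
      · exact div_pos (by linarith [hanti a1 a2 ha1 hlt]) (by linarith)
      · exact div_pos_of_neg_of_neg (by linarith [hanti a2 a1 ha2 hgt]) (by linarith)
    refine lt_of_lt_of_eq (mul_pos (mul_pos hlam hg1) key) ?_
    ring
  · have hS : 0 < (Real.exp (T*a1) - 1)⁻¹ / ((a2-a1)*(a3-a1))
        - (Real.exp (T*a2) - 1)⁻¹ / ((a2-a1)*(a3-a2))
        + (Real.exp (T*a3) - 1)⁻¹ / ((a3-a1)*(a3-a2)) :=
      S_pos (expinv_strictConvex hT) ha1 ha2 ha3 h12 h13 h23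
    refine lt_of_lt_of_eq (mul_pos (mul_pos hlam (mul_pos hg1 hg2)) hS) ?_
    have hw1 : Real.exp (T*a1) - 1 ≠ 0 := ne_of_gt (hEpos a1 ha1)
    have hw2 : Real.exp (T*a2) - 1 ≠ 0 := ne_of_gt (hEpos a2 ha2)
    have hw3 : Real.exp (T*a3) - 1 ≠ 0 := ne_of_gt (hEpos a3 ha3)
    field_simp
    ring
end
end

section
/- Let A be the 3×3 matrix [[-a1,0,0],[g1,-a2,0],[0,g2,-a3]] with distinct constants a1,a2,a3>0 and gains g1,g2>0, B=(1,0,0)ᵀ, C=(0,0,1), and let Φ, F : ℝ → ℝ satisfy Φ(·) ≥ Φ1 > 0 and F(·) ≥ F1 > 0. Then the positive orthant is forward invariant and attracting in one step for the map Q(ξ) = exp(A·Φ(Cξ))·(ξ + F(Cξ)B): for every ξ ∈ ℝ³ with all components nonnegative, all three components of Q(ξ) are strictly positive. -/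
open Matrix Nat

noncomputable section

section Aux

attribute [local instance] Matrix.linftyOpNormedAddCommGroup Matrix.linftyOpNormedRing
  Matrix.linftyOpNormedAlgebra

/-- Powers of an entrywise-nonnegative matrix are entrywise nonnegative. -/
lemma pow_entry_nonneg (M : Matrix (Fin 3) (Fin 3) ℝ) (h : ∀ i j, 0 ≤ M i j) :
    ∀ (n : ℕ) (i j : Fin 3), 0 ≤ (M ^ n) i j := by
  intro n
  induction n with
  | zero =>
      intro i j
      simp only [pow_zero, Matrix.one_apply]
      split <;> norm_num
  | succ n ih =>
      intro i j
      rw [pow_succ, Matrix.mul_apply]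
      exact Finset.sum_nonneg fun k _ => mul_nonneg (ih i k) (h k j)

lemma entry_series_summable (M : Matrix (Fin 3) (Fin 3) ℝ) (i j : Fin 3) :
    Summable fun n : ℕ => (n !⁻¹ : ℝ) * (M ^ n) i j := by
  have hs : Summable fun n : ℕ => (n !⁻¹ : ℝ) • M ^ n :=
    NormedSpace.expSeries_summable' (𝕂 := ℝ) M
  have hc : Continuous fun N : Matrix (Fin 3) (Fin 3) ℝ => N i j :=
    (continuous_apply j).comp (continuous_apply i)
  have := hs.map (Matrix.entryAddMonoidHom ℝ i j) hc
  exact this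

lemma exp_entry_eq (M : Matrix (Fin 3) (Fin 3) ℝ) (i j : Fin 3) :
    NormedSpace.exp M i j = ∑' n : ℕ, (n !⁻¹ : ℝ) * (M ^ n) i j := by
  have hs : Summable fun n : ℕ => (n !⁻¹ : ℝ) • M ^ n :=
    NormedSpace.expSeries_summable' (𝕂 := ℝ) M
  have hc : Continuous fun N : Matrix (Fin 3) (Fin 3) ℝ => N i j :=
    (continuous_apply j).comp (continuous_apply i)
  have h := (hs.hasSum.map (Matrix.entryAddMonoidHom ℝ i j) hc).tsum_eq
  rw [NormedSpace.exp_eq_tsum ℝ]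
  show (Matrix.entryAddMonoidHom ℝ i j) (∑' n : ℕ, (n !⁻¹ : ℝ) • M ^ n) = _
  rw [← h]
  rfl

/-- Lower bound on an entry of the exponential of an entrywise-nonnegative matrix by a
single term of the series. -/
lemma exp_entry_ge (M : Matrix (Fin 3) (Fin 3) ℝ) (h : ∀ i j, 0 ≤ M i j)
    (n : ℕ) (i j : Fin 3) :
    (n !⁻¹ : ℝ) * (M ^ n) i j ≤ NormedSpace.exp M i j := by
  rw [exp_entry_eq]
  refine Summable.le_tsum (entry_series_summable M i j) n fun m _ => ?_
  exact mul_nonneg (by positivity) (pow_entry_nonneg M h m i j)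

lemma exp_entry_nonneg (M : Matrix (Fin 3) (Fin 3) ℝ) (h : ∀ i j, 0 ≤ M i j)
    (i j : Fin 3) : 0 ≤ NormedSpace.exp M i j := by
  rw [exp_entry_eq]
  exact tsum_nonneg fun m => mul_nonneg (by positivity) (pow_entry_nonneg M h m i j)

end Aux

/-- if `Φ(·) ≥ Φ1 > 0` and `F(·) ≥ F1 > 0`, then for every `ξ` with
nonnegative components all three components of `Q(ξ)` are strictly positive. -/
theorem stmt8 (a1 a2 a3 g1 g2 : ℝ) (ha1 : 0 < a1) (ha2 : 0 < a2) (ha3 : 0 < a3)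
    (h12 : a1 ≠ a2) (h13 : a1 ≠ a3) (h23 : a2 ≠ a3) (hg1 : 0 < g1) (hg2 : 0 < g2)
    (Φ F : ℝ → ℝ) (Φ1 F1 : ℝ) (hΦ1 : 0 < Φ1) (hF1 : 0 < F1)
    (hΦ : ∀ y : ℝ, Φ1 ≤ Φ y) (hF : ∀ y : ℝ, F1 ≤ F y) :
    ∀ ξ : Fin 3 → ℝ, (∀ i, 0 ≤ ξ i) → ∀ i, 0 < Qmap a1 a2 a3 g1 g2 Φ F ξ i := by
  intro ξ hξ i
  set y : ℝ := Cvec ⬝ᵥ ξ with hy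
  set s : ℝ := Φ y with hsdef
  have hspos : 0 < s := lt_of_lt_of_le hΦ1 (hΦ y)
  set c : ℝ := a1 + a2 + a3 with hc
  -- The shifted matrix `N = s•A + (s*c)•1` is entrywise nonnegative.
  set N : Matrix (Fin 3) (Fin 3) ℝ :=
    !![s*(c-a1), 0, 0; s*g1, s*(c-a2), 0; 0, s*g2, s*(c-a3)] with hNdef
  have hNentry : ∀ i j, 0 ≤ N i j := by
    intro i j
    fin_cases i <;> fin_cases j <;>
      simp [hNdef] <;> nlinarith
  have hsplit : s • Amat a1 a2 a3 g1 g2 = N + (-(s*c)) • (1 : Matrix (Fin 3) (Fin 3) ℝ) := by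
    ext i j
    fin_cases i <;> fin_cases j <;>
      simp [hNdef, Amat, Matrix.one_apply] <;> ring
  have hcomm : Commute N ((-(s*c)) • (1 : Matrix (Fin 3) (Fin 3) ℝ)) :=
    (Commute.one_right N).smul_right _
  have hdiag : ((-(s*c)) • (1 : Matrix (Fin 3) (Fin 3) ℝ))
      = Matrix.diagonal (fun _ => -(s*c)) := by
    ext i j
    by_cases hij : i = j <;> simp [Matrix.one_apply, Matrix.diagonal_apply, hij]
  have hexpscalar : NormedSpace.exp ((-(s*c)) • (1 : Matrix (Fin 3) (Fin 3) ℝ))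
      = Real.exp (-(s*c)) • (1 : Matrix (Fin 3) (Fin 3) ℝ) := by
    rw [hdiag, Matrix.exp_diagonal]
    ext i j
    by_cases hij : i = j <;>
      simp [Matrix.diagonal_apply, Matrix.one_apply, hij, Real.exp_eq_exp_ℝ]
  have hexp : NormedSpace.exp (s • Amat a1 a2 a3 g1 g2)
      = Real.exp (-(s*c)) • NormedSpace.exp N := by
    rw [hsplit, Matrix.exp_add_of_commute _ _ hcomm, hexpscalar,
      Matrix.mul_smul, mul_one]
  -- the translated input vector
  set x : Fin 3 → ℝ := ξ + F y • Bvec with hx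
  have hx0 : F1 ≤ x 0 := by
    have := hξ 0
    have := hF y
    simp only [hx, Pi.add_apply, Pi.smul_apply, Bvec, smul_eq_mul]
    norm_num
    linarith
  have hx1 : 0 ≤ x 1 := by
    have := hξ 1
    simp only [hx, Pi.add_apply, Pi.smul_apply, Bvec, smul_eq_mul]
    norm_num
    linarith
  have hx2 : 0 ≤ x 2 := by
    have := hξ 2
    simp only [hx, Pi.add_apply, Pi.smul_apply, Bvec, smul_eq_mul]
    norm_num [Matrix.cons_val_two]
    linarith
  set M : Matrix (Fin 3) (Fin 3) ℝ := NormedSpace.exp N with hM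
  have hMnonneg : ∀ i j, 0 ≤ M i j := fun i j => exp_entry_nonneg N hNentry i j
  -- strict positivity of the first column of `exp N`
  have hcol0 : ∀ i, 0 < M i 0 := by
    intro i
    fin_cases i
    · have h0 := exp_entry_ge N hNentry 0 0 0
      simp only [pow_zero, Matrix.one_apply_eq, Nat.factorial_zero] at h0
      calc (0:ℝ) < 1 := one_pos
        _ ≤ M 0 0 := by simpa using h0
    · have h1 := exp_entry_ge N hNentry 1 1 0
      have hval : (N ^ 1) 1 0 = s * g1 := by
        simp [hNdef]
      rw [hval] at h1
      have : 0 < s * g1 := mul_pos hspos hg1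
      calc (0:ℝ) < s * g1 := this
        _ = ((1:ℕ)!⁻¹ : ℝ) * (s * g1) := by norm_num
        _ ≤ M 1 0 := h1
    · have h2 := exp_entry_ge N hNentry 2 2 0
      have hval : (N ^ 2) 2 0 = s * g2 * (s * g1) := by
        rw [sq, Matrix.mul_apply, Fin.sum_univ_three]
        simp [hNdef]
      rw [hval] at h2
      have hpos : 0 < s * g2 * (s * g1) := by positivity
      calc (0:ℝ) < ((2:ℕ)!⁻¹ : ℝ) * (s * g2 * (s * g1)) := by
            rw [show ((2:ℕ)! : ℝ) = 2 by norm_num]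
            positivity
        _ ≤ M 2 0 := h2
  -- put everything together
  have hQ : Qmap a1 a2 a3 g1 g2 Φ F ξ i
      = Real.exp (-(s*c)) * (M.mulVec x i) := by
    simp only [Qmap, ← hy, ← hsdef, ← hx, hexp, ← hM, Matrix.smul_mulVec,
      Pi.smul_apply, smul_eq_mul]
  rw [hQ]
  have hsum : 0 < M.mulVec x i := by
    rw [Matrix.mulVec, dotProduct, Fin.sum_univ_three]
    have h0 : 0 < M i 0 * x 0 := mul_pos (hcol0 i) (lt_of_lt_of_le hF1 hx0)
    have h1 : 0 ≤ M i 1 * x 1 := mul_nonneg (hMnonneg i 1) hx1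
    have h2 : 0 ≤ M i 2 * x 2 := mul_nonneg (hMnonneg i 2) hx2
    linarith
  exact mul_pos (Real.exp_pos _) hsum
end
end

section
/- Let A be the 3×3 matrix [[-a1,0,0],[g1,-a2,0],[0,g2,-a3]] with distinct constants a1,a2,a3>0 and gains g1,g2>0, B=(1,0,0)ᵀ, C=(0,0,1). Suppose the modulation functions Φ, F : ℝ → ℝ are bounded as 0 < Φ1 ≤ Φ(·) ≤ Φ2 and 0 < F1 ≤ F(·) ≤ F2. Then every orbit of the map Q(ξ) = exp(A·Φ(Cξ))·(ξ + F(Cξ)B) starting from a point with nonnegative components is bounded: there exists M (depending on the initial point) such that the sequence X_{n+1} = Q(X_n) satisfies ‖X_n‖ ≤ M for all n. -/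
open Matrix

noncomputable section

abbrev Mat3 := Matrix (Fin 3) (Fin 3) ℝ

lemma lin_exp (φ : Mat3 →ₗ[ℝ] ℝ) (X : Mat3) :
    φ (NormedSpace.exp X) = ∑' (k : ℕ), ((Nat.factorial k : ℝ)⁻¹ * φ (X ^ k)) ∧
      Summable (fun k : ℕ => (Nat.factorial k : ℝ)⁻¹ * φ (X ^ k)) := by
  letI : SeminormedRing Mat3 := Matrix.linftyOpSemiNormedRing
  letI : NormedRing Mat3 := Matrix.linftyOpNormedRing
  letI : NormedAlgebra ℝ Mat3 := Matrix.linftyOpNormedAlgebra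
  have hsum := NormedSpace.expSeries_summable' (𝕂 := ℝ) X
  have hφc : Continuous φ := φ.continuous_of_finiteDimensional
  have hmap := hsum.hasSum.map φ.toAddMonoidHom hφc
  have heq : (φ.toAddMonoidHom ∘ fun k : ℕ => (Nat.factorial k : ℝ)⁻¹ • X ^ k) =
      fun k : ℕ => (Nat.factorial k : ℝ)⁻¹ * φ (X ^ k) := by
    funext k; simp [_root_.map_smul, smul_eq_mul]
  rw [heq] at hmap
  refine ⟨?_, hmap.summable⟩
  rw [NormedSpace.exp_eq_tsum ℝ]; exact hmap.tsum_eq.symm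

lemma real_exp_tsum (x : ℝ) :
    Real.exp x = ∑' (k : ℕ), (Nat.factorial k : ℝ)⁻¹ * x ^ k := by
  rw [Real.exp_eq_exp_ℝ, NormedSpace.exp_eq_tsum ℝ]
  simp [smul_eq_mul]

lemma real_exp_summable (x : ℝ) :
    Summable fun k : ℕ => (Nat.factorial k : ℝ)⁻¹ * x ^ k := by
  have := NormedSpace.expSeries_summable' (𝕂 := ℝ) x
  simpa [smul_eq_mul] using this

/-- exp of `X + c•1` splits off a scalar factor. -/
lemma exp_split (X : Mat3) (c : ℝ) :
    NormedSpace.exp (X + c • (1 : Mat3)) = Real.exp c • NormedSpace.exp X := by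
  letI : SeminormedRing Mat3 := Matrix.linftyOpSemiNormedRing
  letI : NormedRing Mat3 := Matrix.linftyOpNormedRing
  letI : NormedAlgebra ℝ Mat3 := Matrix.linftyOpNormedAlgebra
  have hc : Commute X (c • (1 : Mat3)) := (Commute.one_right X).smul_right c
  rw [Matrix.exp_add_of_commute X (c • 1) hc]
  have h1 : (c • (1 : Mat3)) = algebraMap ℝ Mat3 c := by
    simp [Algebra.algebraMap_eq_smul_one]
  erw [h1, ← NormedSpace.algebraMap_exp_comm (𝕂 := ℝ) (𝔸 := Mat3) c]
  rw [Algebra.algebraMap_eq_smul_one]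
  rw [mul_smul_comm, mul_one, Real.exp_eq_exp_ℝ]

lemma pow_mulVec_nonneg (N : Mat3) (hN : ∀ i j, 0 ≤ N i j) (x : Fin 3 → ℝ)
    (hx : ∀ i, 0 ≤ x i) (k : ℕ) : ∀ i, 0 ≤ (N ^ k).mulVec x i := by
  induction k with
  | zero => simpa using hx
  | succ k ih =>
    intro i
    rw [pow_succ', ← Matrix.mulVec_mulVec]
    show 0 ≤ ∑ j, N i j * (Matrix.mulVec (N ^ k) x) j
    exact Finset.sum_nonneg fun j _ => mul_nonneg (hN i j) (ih j)

lemma pow_vecMul_bound (N : Mat3) (hN : ∀ i j, 0 ≤ N i j) (v : Fin 3 → ℝ)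
    (hv : ∀ i, 0 ≤ v i) (μ : ℝ) (hμ : 0 ≤ μ)
    (hle : ∀ j, (Matrix.vecMul v N) j ≤ μ * v j) (k : ℕ) :
    (∀ j, 0 ≤ Matrix.vecMul v (N ^ k) j) ∧
      (∀ j, Matrix.vecMul v (N ^ k) j ≤ μ ^ k * v j) := by
  induction k with
  | zero => simp [Matrix.vecMul_one]; exact hv
  | succ k ih =>
    obtain ⟨ih0, ih1⟩ := ih
    have hrw : ∀ j, Matrix.vecMul v (N ^ (k + 1)) j
        = ∑ i, Matrix.vecMul v (N ^ k) i * N i j := by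
      intro j
      rw [pow_succ, ← Matrix.vecMul_vecMul]
      rfl
    constructor
    · intro j; rw [hrw]
      exact Finset.sum_nonneg fun i _ => mul_nonneg (ih0 i) (hN i j)
    · intro j; rw [hrw]
      calc ∑ i, Matrix.vecMul v (N ^ k) i * N i j
          ≤ ∑ i, (μ ^ k * v i) * N i j :=
            Finset.sum_le_sum
              (fun i _ => mul_le_mul_of_nonneg_right (ih1 i) (hN i j))
        _ = μ ^ k * Matrix.vecMul v N j := by
            simp only [Matrix.vecMul, dotProduct, Finset.mul_sum]
            exact Finset.sum_congr rfl fun i _ => by ring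
        _ ≤ μ ^ k * (μ * v j) :=
            mul_le_mul_of_nonneg_left (hle j) (pow_nonneg hμ k)
        _ = μ ^ (k + 1) * v j := by ring

/-- entries of `exp (s • A₀)` map the nonneg cone into itself when `A₀` is Metzler. -/
lemma expA_mulVec_nonneg (A₀ : Mat3) (ρ : ℝ) (hN : ∀ i j, 0 ≤ (A₀ + ρ • (1 : Mat3)) i j)
    (s : ℝ) (hs : 0 ≤ s) (x : Fin 3 → ℝ) (hx : ∀ i, 0 ≤ x i) :
    ∀ i, 0 ≤ (NormedSpace.exp (s • A₀)).mulVec x i := by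
  intro i
  set N : Mat3 := A₀ + ρ • 1 with hNdef
  have hsplit : s • A₀ = s • N + (-(s * ρ)) • (1 : Mat3) := by
    rw [hNdef, smul_add, smul_smul]
    rw [add_assoc, ← add_smul]
    simp
  rw [hsplit, exp_split]
  rw [Matrix.smul_mulVec, Pi.smul_apply, smul_eq_mul]
  refine mul_nonneg (Real.exp_nonneg _) ?_
  set φ : Mat3 →ₗ[ℝ] ℝ :=
    { toFun := fun X => X.mulVec x i
      map_add' := by intro X Y; simp [Matrix.add_mulVec]
      map_smul' := by intro r X; simp [Matrix.smul_mulVec] } with hφdef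
  have h := lin_exp φ (s • N)
  show 0 ≤ φ (NormedSpace.exp (s • N))
  rw [h.1]
  refine tsum_nonneg fun k => ?_
  have hpk : φ ((s • N) ^ k) = s ^ k * ((N ^ k).mulVec x i) := by
    rw [smul_pow]; simp [hφdef, Matrix.smul_mulVec]
  rw [hpk]
  have := pow_mulVec_nonneg N (fun i j => hN i j) x hx k i
  positivity

/-- Lyapunov contraction through the matrix exponential. -/
lemma expA_dot_le (A₀ : Mat3) (ρ : ℝ) (hN : ∀ i j, 0 ≤ (A₀ + ρ • (1 : Mat3)) i j)
    (v : Fin 3 → ℝ) (hv : ∀ i, 0 ≤ v i) (c : ℝ) (hc : 0 ≤ c) (hcρ : c ≤ ρ)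
    (hle : ∀ j, Matrix.vecMul v (A₀ + ρ • (1 : Mat3)) j ≤ (ρ - c) * v j)
    (s : ℝ) (hs : 0 ≤ s) (w : Fin 3 → ℝ) (hw : ∀ i, 0 ≤ w i) :
    v ⬝ᵥ (NormedSpace.exp (s • A₀)).mulVec w ≤ Real.exp (-(c * s)) * (v ⬝ᵥ w) := by
  set N : Mat3 := A₀ + ρ • 1 with hNdef
  have hsplit : s • A₀ = s • N + (-(s * ρ)) • (1 : Mat3) := by
    rw [hNdef, smul_add, smul_smul]
    rw [add_assoc, ← add_smul]
    simp
  rw [hsplit, exp_split]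
  rw [Matrix.smul_mulVec, dotProduct_smul, smul_eq_mul]
  set φ : Mat3 →ₗ[ℝ] ℝ :=
    { toFun := fun X => v ⬝ᵥ X.mulVec w
      map_add' := by intro X Y; simp [Matrix.add_mulVec, dotProduct_add]
      map_smul' := by intro r X; simp [Matrix.smul_mulVec] } with hφdef
  have h := lin_exp φ (s • N)
  have hD : 0 ≤ v ⬝ᵥ w :=
    Finset.sum_nonneg fun i _ => mul_nonneg (hv i) (hw i)
  have hvb := pow_vecMul_bound N (fun i j => hN i j) v hv (ρ - c)
    (by linarith) hle
  have hkey : φ (NormedSpace.exp (s • N)) ≤ Real.exp (s * (ρ - c)) * (v ⬝ᵥ w) := by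
    rw [h.1]
    have hRsum : Summable fun k : ℕ =>
        (Nat.factorial k : ℝ)⁻¹ * (s * (ρ - c)) ^ k * (v ⬝ᵥ w) :=
      (real_exp_summable (s * (ρ - c))).mul_right _
    have hterm : ∀ k : ℕ, (Nat.factorial k : ℝ)⁻¹ * φ ((s • N) ^ k) ≤
        (Nat.factorial k : ℝ)⁻¹ * (s * (ρ - c)) ^ k * (v ⬝ᵥ w) := by
      intro k
      have hpk : φ ((s • N) ^ k) = s ^ k * (v ⬝ᵥ (N ^ k).mulVec w) := by
        rw [smul_pow]; simp [hφdef, Matrix.smul_mulVec]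
      have hdp : v ⬝ᵥ (N ^ k).mulVec w ≤ (ρ - c) ^ k * (v ⬝ᵥ w) := by
        rw [Matrix.dotProduct_mulVec]
        calc Matrix.vecMul v (N ^ k) ⬝ᵥ w
            ≤ ∑ i, ((ρ - c) ^ k * v i) * w i :=
              Finset.sum_le_sum fun i _ =>
                mul_le_mul_of_nonneg_right ((hvb k).2 i) (hw i)
          _ = (ρ - c) ^ k * (v ⬝ᵥ w) := by
              simp [dotProduct, Finset.mul_sum, mul_assoc]
      rw [hpk]
      have hsk : 0 ≤ s ^ k := pow_nonneg hs k
      calc (Nat.factorial k : ℝ)⁻¹ * (s ^ k * (v ⬝ᵥ (N ^ k).mulVec w))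
          ≤ (Nat.factorial k : ℝ)⁻¹ * (s ^ k * ((ρ - c) ^ k * (v ⬝ᵥ w))) := by
            refine mul_le_mul_of_nonneg_left ?_ (by positivity)
            exact mul_le_mul_of_nonneg_left hdp hsk
        _ = (Nat.factorial k : ℝ)⁻¹ * (s * (ρ - c)) ^ k * (v ⬝ᵥ w) := by
            rw [mul_pow]; ring
    calc (∑' (k : ℕ), (Nat.factorial k : ℝ)⁻¹ * φ ((s • N) ^ k))
        ≤ ∑' (k : ℕ), (Nat.factorial k : ℝ)⁻¹ * (s * (ρ - c)) ^ k * (v ⬝ᵥ w) :=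
          Summable.tsum_le_tsum hterm h.2 hRsum
      _ = Real.exp (s * (ρ - c)) * (v ⬝ᵥ w) := by
          rw [tsum_mul_right, ← real_exp_tsum]
  calc Real.exp (-(s * ρ)) * (v ⬝ᵥ (NormedSpace.exp (s • N)).mulVec w)
      ≤ Real.exp (-(s * ρ)) * (Real.exp (s * (ρ - c)) * (v ⬝ᵥ w)) :=
        mul_le_mul_of_nonneg_left hkey (Real.exp_nonneg _)
    _ = Real.exp (-(c * s)) * (v ⬝ᵥ w) := by
        rw [← mul_assoc, ← Real.exp_add]; ring_nf

set_option maxHeartbeats 2000000 in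
/-- if the modulation functions obey the bounds
`0 < Φ1 ≤ Φ(·) ≤ Φ2` and `0 < F1 ≤ F(·) ≤ F2`, then every orbit `X_{n+1} = Q(X_n)`
starting from a point with nonnegative components is bounded. -/
theorem stmt11 (a1 a2 a3 g1 g2 : ℝ) (ha1 : 0 < a1) (ha2 : 0 < a2) (ha3 : 0 < a3)
    (h12 : a1 ≠ a2) (h13 : a1 ≠ a3) (h23 : a2 ≠ a3) (hg1 : 0 < g1) (hg2 : 0 < g2)
    (Φ F : ℝ → ℝ) (Φ1 Φ2 F1 F2 : ℝ) (hΦ1 : 0 < Φ1) (hF1 : 0 < F1)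
    (hΦbd : ∀ y : ℝ, Φ1 ≤ Φ y ∧ Φ y ≤ Φ2) (hFbd : ∀ y : ℝ, F1 ≤ F y ∧ F y ≤ F2)
    (X0 : Fin 3 → ℝ) (hX0 : ∀ i, 0 ≤ X0 i) :
    ∃ M : ℝ, ∀ n : ℕ, ‖(Qmap a1 a2 a3 g1 g2 Φ F)^[n] X0‖ ≤ M := by
  set A : Mat3 := Amat a1 a2 a3 g1 g2 with hA
  set ρ : ℝ := a1 + a2 + a3 with hρ
  set v : Fin 3 → ℝ := ![4 * g1 * g2 / (a1 * a2), 2 * g2 / a2, 1] with hv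
  set c : ℝ := min (min (a1 / 2) (a2 / 2)) a3 with hc
  have hcpos : 0 < c := lt_min (lt_min (by linarith) (by linarith)) ha3
  have hc1 : c ≤ a1 / 2 := (min_le_left _ _).trans (min_le_left _ _)
  have hc2 : c ≤ a2 / 2 := (min_le_left _ _).trans (min_le_right _ _)
  have hc3 : c ≤ a3 := min_le_right _ _
  have hcρ : c ≤ ρ := hc3.trans (by rw [hρ]; linarith)
  have hvpos : ∀ i, 0 < v i := by
    intro i; fin_cases i <;> simp [hv] <;> positivity
  have hvnn : ∀ i, 0 ≤ v i := fun i => (hvpos i).le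
  have hN : ∀ i j, 0 ≤ (A + ρ • (1 : Mat3)) i j := by
    intro i j
    fin_cases i <;> fin_cases j <;>
      simp [hA, Amat, Matrix.add_apply, Matrix.smul_apply, Matrix.one_apply, hρ] <;> linarith
  have hle : ∀ j, Matrix.vecMul v (A + ρ • (1 : Mat3)) j ≤ (ρ - c) * v j := by
    intro j
    have hexp : ∀ j', Matrix.vecMul v (A + ρ • (1 : Mat3)) j' =
        ∑ i, v i * (A + ρ • (1 : Mat3)) i j' := fun j' => rfl
    fin_cases j <;>
      rw [hexp] <;>
      rw [Fin.sum_univ_three] <;>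
      simp [hA, Amat, Matrix.add_apply, Matrix.smul_apply, Matrix.one_apply, hv, hρ]
    · -- column 0 : v0*(ρ - a1) + v1*g1 ≤ (ρ - c)*v0
      rw [div_mul_eq_mul_div, div_mul_eq_mul_div,
        div_add_div _ _ (by positivity) (by positivity), ← mul_div_assoc,
        div_le_div_iff₀ (by positivity) (by positivity)]
      nlinarith [mul_nonneg (mul_nonneg (mul_nonneg hg1.le hg2.le)
        (mul_nonneg ha2.le (mul_nonneg ha1.le ha2.le)))
        (by linarith : (0:ℝ) ≤ a1 - 2*c)]
    · -- column 1
      rw [div_mul_eq_mul_div, ← mul_div_assoc,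
        div_add' _ _ _ (by positivity : (a2:ℝ) ≠ 0), div_le_div_iff₀ ha2 ha2]
      nlinarith [mul_nonneg (mul_nonneg hg2.le ha2.le)
        (by linarith : (0:ℝ) ≤ a2 - 2*c)]
    · -- column 2
      linarith
  set Q := Qmap a1 a2 a3 g1 g2 Φ F with hQ
  set r : ℝ := Real.exp (-(c * Φ1)) with hr
  have hr0 : 0 < r := Real.exp_pos _
  have hr1 : r < 1 := by
    rw [hr, Real.exp_lt_one_iff]; nlinarith
  have hBnn : ∀ i, (0 : ℝ) ≤ Bvec i := by
    intro i; fin_cases i <;> norm_num [Bvec]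
  have hvB : v ⬝ᵥ Bvec = v 0 := by
    simp [dotProduct, Fin.sum_univ_three, Bvec, hv]
  have hstep : ∀ ξ : Fin 3 → ℝ, (∀ i, 0 ≤ ξ i) →
      (∀ i, 0 ≤ Q ξ i) ∧ v ⬝ᵥ Q ξ ≤ r * (v ⬝ᵥ ξ + F2 * v 0) := by
    intro ξ hξ
    set y : ℝ := Cvec ⬝ᵥ ξ with hy
    have hs1 : Φ1 ≤ Φ y := (hΦbd y).1
    have hs0 : 0 ≤ Φ y := le_trans hΦ1.le hs1
    have hf1 : F1 ≤ F y := (hFbd y).1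
    have hf2 : F y ≤ F2 := (hFbd y).2
    have hf0 : 0 ≤ F y := le_trans hF1.le hf1
    set w : Fin 3 → ℝ := ξ + F y • Bvec with hw
    have hwnn : ∀ i, 0 ≤ w i := by
      intro i
      have : w i = ξ i + F y * Bvec i := rfl
      rw [this]
      have := hBnn i
      have := hξ i
      positivity
    have hQξ : Q ξ = (NormedSpace.exp (Φ y • A)).mulVec w := rfl
    constructor
    · rw [hQξ]
      exact expA_mulVec_nonneg A ρ hN (Φ y) hs0 w hwnn
    · rw [hQξ]
      have h1 := expA_dot_le A ρ hN v hvnn c hcpos.le hcρ hle (Φ y) hs0 w hwnn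
      have hvw : v ⬝ᵥ w = v ⬝ᵥ ξ + F y * v 0 := by
        rw [hw, dotProduct_add, dotProduct_smul, smul_eq_mul, hvB]
      have hvw0 : 0 ≤ v ⬝ᵥ w :=
        Finset.sum_nonneg fun i _ => mul_nonneg (hvnn i) (hwnn i)
      have hvξ0 : 0 ≤ v ⬝ᵥ ξ :=
        Finset.sum_nonneg fun i _ => mul_nonneg (hvnn i) (hξ i)
      have hexps : Real.exp (-(c * Φ y)) ≤ r := by
        rw [hr, Real.exp_le_exp]
        nlinarith
      calc v ⬝ᵥ (NormedSpace.exp (Φ y • A)).mulVec w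
          ≤ Real.exp (-(c * Φ y)) * (v ⬝ᵥ w) := h1
        _ ≤ r * (v ⬝ᵥ w) := mul_le_mul_of_nonneg_right hexps hvw0
        _ ≤ r * (v ⬝ᵥ ξ + F2 * v 0) := by
            refine mul_le_mul_of_nonneg_left ?_ hr0.le
            rw [hvw]
            have := hvpos 0
            nlinarith
  -- the Lyapunov bound along the orbit
  set D : ℝ := F2 * v 0 with hD
  have hD0 : 0 ≤ D := by
    have := (hFbd 0).1; have := (hFbd 0).2; have := hvpos 0
    rw [hD]; nlinarith
  have hL0 : 0 ≤ v ⬝ᵥ X0 :=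
    Finset.sum_nonneg fun i _ => mul_nonneg (hvnn i) (hX0 i)
  set K : ℝ := v ⬝ᵥ X0 + r * D / (1 - r) with hK
  have h1r : 0 < 1 - r := by linarith
  have hK0 : 0 ≤ K := by
    rw [hK]
    have : 0 ≤ r * D / (1 - r) := div_nonneg (mul_nonneg hr0.le hD0) h1r.le
    linarith
  have horb : ∀ n : ℕ, (∀ i, 0 ≤ Q^[n] X0 i) ∧ v ⬝ᵥ Q^[n] X0 ≤ K := by
    intro n
    induction n with
    | zero =>
      refine ⟨by simpa using hX0, ?_⟩
      simp only [Function.iterate_zero, id_eq]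
      rw [hK]
      have : 0 ≤ r * D / (1 - r) := div_nonneg (mul_nonneg hr0.le hD0) h1r.le
      linarith
    | succ n ih =>
      obtain ⟨ih0, ih1⟩ := ih
      rw [Function.iterate_succ_apply']
      obtain ⟨h0, h1⟩ := hstep (Q^[n] X0) ih0
      refine ⟨h0, ?_⟩
      have hLn : 0 ≤ v ⬝ᵥ Q^[n] X0 :=
        Finset.sum_nonneg fun i _ => mul_nonneg (hvnn i) (ih0 i)
      have hmid : r * (v ⬝ᵥ Q^[n] X0 + D) ≤ r * (K + D) := by
        refine mul_le_mul_of_nonneg_left (by linarith) hr0.le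
      have hfin : r * (K + D) ≤ K := by
        have e : r * D / (1 - r) * (1 - r) = r * D := div_mul_cancel₀ _ h1r.ne'
        rw [hK]
        nlinarith [e, hL0, hD0]
      calc v ⬝ᵥ Q (Q^[n] X0) ≤ r * (v ⬝ᵥ Q^[n] X0 + D) := h1
        _ ≤ r * (K + D) := hmid
        _ ≤ K := hfin
  -- convert the Lyapunov bound into a norm bound
  set vmin : ℝ := min (min (v 0) (v 1)) (v 2) with hvmin
  have hvmin0 : 0 < vmin :=
    lt_min (lt_min (hvpos 0) (hvpos 1)) (hvpos 2)
  have hvmi : ∀ i, vmin ≤ v i := by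
    intro i
    fin_cases i
    · exact (min_le_left _ _).trans (min_le_left _ _)
    · exact (min_le_left _ _).trans (min_le_right _ _)
    · exact min_le_right _ _
  refine ⟨K / vmin, fun n => ?_⟩
  obtain ⟨h0, h1⟩ := horb n
  rw [pi_norm_le_iff_of_nonneg (by positivity)]
  intro i
  rw [Real.norm_eq_abs, abs_of_nonneg (h0 i)]
  rw [le_div_iff₀ hvmin0]
  have hdot : v ⬝ᵥ Q^[n] X0 = ∑ j, v j * Q^[n] X0 j := rfl
  have hterm : v i * Q^[n] X0 i ≤ v ⬝ᵥ Q^[n] X0 := by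
    rw [hdot, Fin.sum_univ_three]
    have t0 := mul_nonneg (hvnn 0) (h0 0)
    have t1 := mul_nonneg (hvnn 1) (h0 1)
    have t2 := mul_nonneg (hvnn 2) (h0 2)
    fin_cases i <;> simp <;> linarith
  calc Q^[n] X0 i * vmin ≤ Q^[n] X0 i * v i := by
        refine mul_le_mul_of_nonneg_left (hvmi i) (h0 i)
    _ = v i * Q^[n] X0 i := by ring
    _ ≤ v ⬝ᵥ Q^[n] X0 := hterm
    _ ≤ K := h1
end
end
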